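/- Let q be a prime power, F = F_{q^2}, σ the automorphism x ↦ x^q, and m ≥ 1 with q^2 ≥ (q+1)m. Let V be a 2-dimensional F-vector space and ω_1, ..., ω_m be σ-hermitian forms on V, each admitting a non-isotropic vector. Then there exists u ∈ V with ω_i(u,u) ≠ 0 for all 1 ≤ i ≤ m. -/

import Mathlib

open Module

open Polynomial Finset in
private lemma aux_card_roots {F : Type*} [Field F] [Fintype F] [DecidableEq F]
    (p : Polynomial F) (hp : p ≠ 0) :
    (univ.filter fun t : F => p.eval t = 0).card ≤ p.natDegree := by
  have hsub : (univ.filter fun t : F => p.eval t = 0) ⊆ p.roots.toFinset := by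
    intro t ht
    simp only [mem_filter] at ht
    simp [Multiset.mem_toFinset, mem_roots, hp, IsRoot, ht.2]
  calc (univ.filter fun t : F => p.eval t = 0).card ≤ p.roots.toFinset.card :=
        Finset.card_le_card hsub
    _ ≤ Multiset.card p.roots := p.roots.toFinset_card_le
    _ ≤ p.natDegree := p.card_roots'

/-- Over `F = F_{q^2}` with involution `σ : x ↦ x^q` and `q^2 ≥ (q+1)m`,
given `m` σ-hermitian forms on a 2-dimensional `F`-vector space, each admitting a
non-isotropic vector, there is a common non-isotropic vector. -/
theorem exists_common_nonisotropic_hermitian {F V : Type*} [Field F] [Fintype F]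
    [AddCommGroup V] [Module F V] (q m : ℕ)
    (hq : ∃ (p n : ℕ), p.Prime ∧ 0 < n ∧ q = p ^ n)
    (hF : Fintype.card F = q ^ 2)
    (σ : F →+* F) (hσ : ∀ x : F, σ x = x ^ q)
    (hm : 1 ≤ m) (hcard : (q + 1) * m ≤ q ^ 2)
    (hdim : finrank F V = 2)
    (ω : Fin m → (V →ₗ[F] V →ₛₗ[σ] F))
    (hherm : ∀ i, ∀ x y : V, ω i x y = σ (ω i y x))
    (hniso : ∀ i, ∃ v : V, ω i v v ≠ 0) :
    ∃ u : V, ∀ i, ω i u u ≠ 0 := by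
  classical
  obtain ⟨pp, n, hpp, hn, hqe⟩ := hq
  have hq2 : 2 ≤ q := by
    subst hqe
    calc 2 ≤ pp := hpp.two_le
    _ ≤ pp ^ n := Nat.le_self_pow hn.ne' pp
  have : Module.Finite F V := Module.finite_of_finrank_eq_succ hdim
  let B := Module.finBasisOfFinrankEq F V hdim
  set e := B 0 with he
  set f := B 1 with hf
  let g : Option F → V := fun o => o.elim f (fun t => e + t • f)
  let Bad : Fin m → Finset (Option F) :=
    fun i => Finset.univ.filter (fun o => ω i (g o) (g o) = 0)
  have key : ∀ i, (Bad i).card ≤ q + 1 := by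
    intro i
    set a := ω i e e with ha
    set b := ω i f e with hb
    set c := ω i f f with hc
    have hef : ω i e f = σ b := by rw [hherm i e f]
    set p : Polynomial F :=
      Polynomial.C a + Polynomial.C b * Polynomial.X
        + Polynomial.C (σ b) * Polynomial.X ^ q
        + Polynomial.C c * Polynomial.X ^ (q + 1) with hp
    have hval : ∀ t : F, ω i (g (some t)) (g (some t)) = p.eval t := by
      intro t
      show ω i (e + t • f) (e + t • f) = _
      simp only [map_add, map_smul, LinearMap.add_apply, LinearMap.smul_apply,
        map_smulₛₗ, smul_eq_mul, hp, Polynomial.eval_add, Polynomial.eval_mul,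
        Polynomial.eval_C, Polynomial.eval_X, Polynomial.eval_pow, hσ, hef,
        ← ha, ← hb, ← hc]
      ring
    by_cases hc0 : c ≠ 0
    · -- degree q+1 case
      have hpne : p ≠ 0 := by
        intro h0
        apply hc0
        have hcc : p.coeff (q + 1) = c := by
          simp [hp, Polynomial.coeff_C, Polynomial.coeff_X_pow,
            Polynomial.coeff_C_mul, Polynomial.coeff_X]
          omega
        rw [← hcc, h0, Polynomial.coeff_zero]
      have hdeg : p.natDegree ≤ q + 1 := by
        rw [hp]; compute_degree
      have hsub : Bad i ⊆ (Finset.univ.filter fun t : F => p.eval t = 0).image some := by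
        intro o ho
        simp only [Bad, Finset.mem_filter, Finset.mem_univ, true_and] at ho
        cases o with
        | none => exact absurd ho hc0
        | some t =>
          simp only [Finset.mem_image, Finset.mem_filter, Finset.mem_univ, true_and]
          exact ⟨t, by rw [← hval]; exact ho, rfl⟩
      calc (Bad i).card ≤ _ := Finset.card_le_card hsub
        _ ≤ (Finset.univ.filter fun t : F => p.eval t = 0).card := Finset.card_image_le
        _ ≤ p.natDegree := aux_card_roots p hpne
        _ ≤ q + 1 := hdeg
    · push_neg at hc0
      by_cases hb0 : b ≠ 0
      · have hσb : σ b ≠ 0 := fun h => hb0 (σ.injective (by simp [h]))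
        have hpne : p ≠ 0 := by
          intro h0
          apply hσb
          have hcc : p.coeff q = σ b := by
            simp [hp, hc0, Polynomial.coeff_C, Polynomial.coeff_X_pow,
              Polynomial.coeff_C_mul, Polynomial.coeff_X]
            rw [if_neg (by omega), if_neg (by omega)]
            ring
          rw [← hcc, h0, Polynomial.coeff_zero]
        have hdeg : p.natDegree ≤ q := by
          rw [hp, hc0]
          simp only [map_zero, zero_mul, add_zero]
          compute_degree
          exact max_le (by omega) le_rfl
        have hsub : Bad i ⊆ insert none
            ((Finset.univ.filter fun t : F => p.eval t = 0).image some) := by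
          intro o ho
          simp only [Bad, Finset.mem_filter, Finset.mem_univ, true_and] at ho
          cases o with
          | none => exact Finset.mem_insert_self _ _
          | some t =>
            apply Finset.mem_insert_of_mem
            simp only [Finset.mem_image, Finset.mem_filter, Finset.mem_univ, true_and]
            exact ⟨t, by rw [← hval]; exact ho, rfl⟩
        calc (Bad i).card ≤ _ := Finset.card_le_card hsub
          _ ≤ ((Finset.univ.filter fun t : F => p.eval t = 0).image some).card + 1 :=
            Finset.card_insert_le _ _
          _ ≤ (Finset.univ.filter fun t : F => p.eval t = 0).card + 1 := by
            exact Nat.add_le_add_right Finset.card_image_le 1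
          _ ≤ p.natDegree + 1 := Nat.add_le_add_right (aux_card_roots p hpne) 1
          _ ≤ q + 1 := Nat.add_le_add_right hdeg 1
      · push_neg at hb0
        have hσb : σ b = 0 := by simp [hb0]
        -- then a ≠ 0, else the form vanishes
        have ha0 : a ≠ 0 := by
          intro ha0
          obtain ⟨v, hv⟩ := hniso i
          apply hv
          have hvrep : v = B.repr v 0 • e + B.repr v 1 • f := by
            conv_lhs => rw [← B.sum_repr v]
            rw [Fin.sum_univ_two]
          rw [hvrep]
          simp only [map_add, map_smul, LinearMap.add_apply, LinearMap.smul_apply,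
            map_smulₛₗ, smul_eq_mul, hef, ← ha, ← hb, ← hc, ha0, hb0, hc0, hσb,
            map_zero, mul_zero, zero_mul, add_zero]
        have hsub : Bad i ⊆ {none} := by
          intro o ho
          simp only [Bad, Finset.mem_filter, Finset.mem_univ, true_and] at ho
          cases o with
          | none => exact Finset.mem_singleton_self _
          | some t =>
            exfalso
            apply ha0
            have := (hval t).symm.trans ho
            simpa [hp, hb0, hσb, hc0] using this
        calc (Bad i).card ≤ 1 := by simpa using Finset.card_le_card hsub
          _ ≤ q + 1 := by omega
  -- counting
  have hub : ((Finset.univ : Finset (Fin m)).biUnion Bad).card ≤ q ^ 2 := by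
    calc ((Finset.univ : Finset (Fin m)).biUnion Bad).card
        ≤ ∑ i, (Bad i).card := Finset.card_biUnion_le
      _ ≤ ∑ _i : Fin m, (q + 1) := Finset.sum_le_sum fun i _ => key i
      _ = m * (q + 1) := by simp [mul_comm]
      _ ≤ q ^ 2 := by rw [mul_comm]; exact hcard
  have hcardO : Fintype.card (Option F) = q ^ 2 + 1 := by
    rw [Fintype.card_option, hF]
  have : ∃ o : Option F, o ∉ (Finset.univ : Finset (Fin m)).biUnion Bad := by
    by_contra hcon
    push_neg at hcon
    have : (Finset.univ : Finset (Option F)) ⊆ (Finset.univ : Finset (Fin m)).biUnion Bad :=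
      fun o _ => hcon o
    have := Finset.card_le_card this
    rw [Finset.card_univ, hcardO] at this
    omega
  obtain ⟨o, ho⟩ := this
  refine ⟨g o, fun i => ?_⟩
  intro h
  apply ho
  exact Finset.mem_biUnion.mpr ⟨i, Finset.mem_univ i, by simp [Bad, h]⟩
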